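/- In a many-to-one matching market with strict preferences, the set of matched users and the number of filled positions at each BS are the same in every stable matching (the 'rural hospitals' theorem). -/

import Mathlib

open scoped Classical

/-- A many-to-one matching market: quotas, users' strict preference lists
(acceptable BSs in decreasing order of preference), and BSs' strict rankings
of users (lower rank = more preferred). -/
structure Market (M L : Type*) where
  quota : L → ℕ
  uPref : M → List L
  bRank : L → M → ℕ

namespace Market

variable {M L : Type*} [Fintype M] [Fintype L]

/-- User `m` strictly prefers BS `l` to BS `l'`. -/
noncomputable def uPrefers (mk : Market M L) (m : M) (l l' : L) : Prop :=
  l ∈ mk.uPref m ∧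
    (mk.uPref m).findIdx (fun x => decide (x = l)) <
      (mk.uPref m).findIdx (fun x => decide (x = l'))

/-- Keep the (up to) `q` best-ranked members of `s`. -/
noncomputable def topQ (q : ℕ) (rank : M → ℕ) (s : Finset M) : Finset M :=
  s.filter (fun m => (s.filter (fun m' => rank m' < rank m)).card < q)

/-- State of the deferred acceptance algorithm: for each user, the set of BSs
it has already proposed to, and for each BS, the set of users it tentatively holds. -/
structure DAState (M L : Type*) where
  proposed : M → Finset L
  hold : L → Finset M

/-- The most preferred BS that user `m` has not yet proposed to. -/
noncomputable def nextProposal (mk : Market M L) (s : DAState M L) (m : M) : Option L :=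
  (mk.uPref m).find? (fun l => decide (l ∉ s.proposed m))

/-- A user is (tentatively) matched if some BS holds it. -/
def matched (s : DAState M L) (m : M) : Prop := ∃ l, m ∈ s.hold l

/-- Users proposing to BS `l` in the current round. -/
noncomputable def proposalsTo (mk : Market M L) (s : DAState M L) (l : L) : Finset M :=
  Finset.univ.filter (fun m => ¬ matched s m ∧ nextProposal mk s m = some l)

/-- One round of user-proposing deferred acceptance: every unmatched user proposes
to its most preferred BS not yet proposed to; every BS keeps the best applicants
up to its quota (among current holds and new proposers) and rejects the rest. -/
noncomputable def step (mk : Market M L) (s : DAState M L) : DAState M L where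
  proposed := fun m =>
    if matched s m then s.proposed m
    else
      match nextProposal mk s m with
      | some l => insert l (s.proposed m)
      | none => s.proposed m
  hold := fun l => topQ (mk.quota l) (mk.bRank l) (s.hold l ∪ proposalsTo mk s l)

/-- The run of the deferred acceptance algorithm from the empty initial state. -/
noncomputable def run (mk : Market M L) : ℕ → DAState M L
  | 0 => ⟨fun _ => ∅, fun _ => ∅⟩
  | n + 1 => step mk (run mk n)

/-- `μ` is a feasible many-to-one matching: quotas respected, each user assigned
to at most one BS. -/
def IsMatching (mk : Market M L) (μ : L → Finset M) : Prop :=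
  (∀ l, (μ l).card ≤ mk.quota l) ∧ ∀ m l l', m ∈ μ l → m ∈ μ l' → l = l'

/-- Individual rationality: every user is assigned only to an acceptable BS. -/
def IndivRational (mk : Market M L) (μ : L → Finset M) : Prop :=
  ∀ l m, m ∈ μ l → l ∈ mk.uPref m

/-- `(m, l)` is a blocking pair for `μ`: `l` is acceptable to `m`, `m` is not
assigned to `l` and strictly prefers `l` to its assignment (if any), and `l`
either has a free slot or strictly prefers `m` to one of its assigned users. -/
def Blocks (mk : Market M L) (μ : L → Finset M) (m : M) (l : L) : Prop :=
  l ∈ mk.uPref m ∧ m ∉ μ l ∧ (∀ l', m ∈ μ l' → mk.uPrefers m l l') ∧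
    ((μ l).card < mk.quota l ∨ ∃ m' ∈ μ l, mk.bRank l m < mk.bRank l m')

/-- Stability: feasible, individually rational, and no blocking pair. -/
def IsStable (mk : Market M L) (μ : L → Finset M) : Prop :=
  IsMatching mk μ ∧ IndivRational mk μ ∧ ∀ m l, ¬ Blocks mk μ m l

end Market

section RHaux
open Market

theorem findIdx_inj {α : Type*} {xs : List α} (h : xs.Nodup) {a b : α}
    (ha : a ∈ xs) (hb : b ∈ xs)
    (hidx : xs.findIdx (fun x => decide (x = a)) = xs.findIdx (fun x => decide (x = b))) :
    a = b := by
  induction xs with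
  | nil => simp at ha
  | cons x xs ih =>
    rw [List.nodup_cons] at h
    rw [List.findIdx_cons, List.findIdx_cons] at hidx
    by_cases hxa : x = a
    · by_cases hxb : x = b
      · exact hxa ▸ hxb
      · exfalso
        simp only [decide_eq_true hxa, decide_eq_false hxb, cond_true, cond_false] at hidx
        exact Nat.succ_ne_zero _ hidx.symm
    · by_cases hxb : x = b
      · exfalso
        simp only [decide_eq_false hxa, decide_eq_true hxb, cond_true, cond_false] at hidx
        exact Nat.succ_ne_zero _ hidx
      · simp only [decide_eq_false hxa, decide_eq_false hxb, cond_false,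
          Nat.add_right_cancel_iff] at hidx
        exact ih h.2 ((List.mem_cons.mp ha).resolve_left (fun h' => hxa h'.symm))
          ((List.mem_cons.mp hb).resolve_left (fun h' => hxb h'.symm)) hidx

theorem find?_first {α : Type*} {p : α → Bool} {xs : List α} (h : xs.Nodup) {b : α}
    (hf : xs.find? p = some b) {a : α} (ha : a ∈ xs)
    (hlt : xs.findIdx (fun x => decide (x = a)) < xs.findIdx (fun x => decide (x = b))) :
    p a = false := by
  induction xs with
  | nil => simp at hf
  | cons x xs ih =>
    rw [List.nodup_cons] at h
    by_cases hpx : p x = true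
    · rw [List.find?_cons_of_pos hpx] at hf
      have hbx : b = x := by injection hf with h'; exact h'.symm
      rw [List.findIdx_cons, List.findIdx_cons] at hlt
      simp [hbx.symm] at hlt
    · have hpx' : p x = false := by
        cases hv : p x
        · rfl
        · exact absurd hv hpx
      rw [List.find?_cons_of_neg hpx] at hf
      have hbmem : b ∈ xs := List.mem_of_find?_eq_some hf
      have hbx : ¬ x = b := fun h' => h.1 (h' ▸ hbmem)
      rw [List.findIdx_cons, List.findIdx_cons] at hlt
      rcases List.mem_cons.mp ha with rfl | hamem
      · exact hpx'
      · have hxa : ¬ x = a := fun h' => h.1 (h' ▸ hamem)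
        simp only [decide_eq_false hxa, decide_eq_false hbx, cond_false,
          Nat.add_lt_add_iff_right] at hlt
        exact ih h.2 hf hamem hlt

variable {M L : Type*} [Fintype M] [Fintype L]

theorem mem_topQ {q : ℕ} {r : M → ℕ} {s : Finset M} {m : M} :
    m ∈ topQ q r s ↔ m ∈ s ∧ (s.filter (fun m' => r m' < r m)).card < q :=
  Finset.mem_filter

theorem topQ_card_le {q : ℕ} {r : M → ℕ} (hr : Function.Injective r) (s : Finset M) :
    (topQ q r s).card ≤ q := by
  have key : ∀ a ∈ s, ∀ b ∈ s, r a < r b →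
      (s.filter (fun m' => r m' < r a)).card < (s.filter (fun m' => r m' < r b)).card := by
    intro a ha b hb hab
    apply Finset.card_lt_card
    rw [Finset.ssubset_iff_of_subset
      (Finset.monotone_filter_right _ (fun x _ hx => lt_trans hx hab))]
    exact ⟨a, Finset.mem_filter.mpr ⟨ha, hab⟩, fun hmem =>
      absurd (Finset.mem_filter.mp hmem).2 (lt_irrefl _)⟩
  have hle : (topQ q r s).card ≤ (Finset.range q).card := by
    apply Finset.card_le_card_of_injOn (fun m => (s.filter (fun m' => r m' < r m)).card)
    · intro a hamem
      exact Finset.mem_range.mpr (mem_topQ.mp hamem).2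
    · intro a haS b hbS hab
      have haT : a ∈ topQ q r s := haS
      have hbT : b ∈ topQ q r s := hbS
      have has : a ∈ s := (mem_topQ.mp haT).1
      have hbs : b ∈ s := (mem_topQ.mp hbT).1
      by_contra hne
      rcases lt_or_gt_of_ne (fun h => hne (hr h)) with hlt | hlt
      · exact absurd hab (ne_of_lt (key a has b hbs hlt))
      · exact absurd hab.symm (ne_of_lt (key b hbs a has hlt))
  simpa using hle

variable {mk : Market M L} {ν : L → Finset M} {s : DAState M L}

theorem mem_proposalsTo {l : L} {m : M} :
    m ∈ proposalsTo mk s l ↔ ¬ matched s m ∧ nextProposal mk s m = some l := by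
  simp [proposalsTo]

theorem step_proposed (mk : Market M L) (s : DAState M L) (m : M) :
    (step mk s).proposed m =
      if matched s m then s.proposed m
      else
        match nextProposal mk s m with
        | some l => insert l (s.proposed m)
        | none => s.proposed m := rfl

theorem step_hold (mk : Market M L) (s : DAState M L) (l : L) :
    (step mk s).hold l = topQ (mk.quota l) (mk.bRank l) (s.hold l ∪ proposalsTo mk s l) := rfl

theorem subset_step_proposed (m : M) : s.proposed m ⊆ (step mk s).proposed m := by
  rw [step_proposed]
  split_ifs with h
  · exact Finset.Subset.refl _
  · cases hnp : nextProposal mk s m with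
    | none => exact Finset.Subset.refl _
    | some l => exact Finset.subset_insert _ _

theorem step_proposed_cases {m : M} {l : L} (h : l ∈ (step mk s).proposed m) :
    l ∈ s.proposed m ∨ (¬ matched s m ∧ nextProposal mk s m = some l) := by
  rw [step_proposed] at h
  split_ifs at h with hm
  · exact Or.inl h
  · cases hnp : nextProposal mk s m with
    | none => rw [hnp] at h; exact Or.inl h
    | some l' =>
      rw [hnp] at h
      rcases Finset.mem_insert.mp h with rfl | h'
      · exact Or.inr ⟨hm, rfl⟩
      · exact Or.inl h'

structure DAInv (mk : Market M L) (ν : L → Finset M) (s : DAState M L) : Prop where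
  A : ∀ l, (s.hold l).card ≤ mk.quota l
  B : ∀ l m, m ∈ s.hold l → l ∈ s.proposed m
  C : ∀ m l, l ∈ s.proposed m → l ∈ mk.uPref m
  D : ∀ m l l', m ∈ s.hold l → m ∈ s.hold l' → l = l'
  E : ∀ m l₁ l₂, l₂ ∈ s.proposed m → l₁ ∈ mk.uPref m →
      (mk.uPref m).findIdx (fun x => decide (x = l₁)) <
        (mk.uPref m).findIdx (fun x => decide (x = l₂)) → l₁ ∈ s.proposed m
  O : ∀ m l, m ∈ ν l → l ∈ s.proposed m → m ∈ s.hold l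

theorem prefers_aux (hU : ∀ m, (mk.uPref m).Nodup) (hIR : IndivRational mk ν)
    (hs : DAInv mk ν s) {m : M} {l : L}
    (hcase : m ∈ s.hold l ∨ (¬ matched s m ∧ nextProposal mk s m = some l))
    {l' : L} (hml' : m ∈ ν l') (hne : l' ≠ l) : mk.uPrefers m l l' := by
  have hlm : l ∈ mk.uPref m := by
    rcases hcase with hh | ⟨_, hnp⟩
    · exact hs.C m l (hs.B l m hh)
    · exact List.mem_of_find?_eq_some hnp
  have hl'm : l' ∈ mk.uPref m := hIR l' m hml'
  refine ⟨hlm, ?_⟩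
  rcases Nat.lt_trichotomy ((mk.uPref m).findIdx (fun x => decide (x = l)))
      ((mk.uPref m).findIdx (fun x => decide (x = l'))) with h | h | h
  · exact h
  · exact absurd (findIdx_inj (hU m) hlm hl'm h) (fun he => hne he.symm)
  · exfalso
    rcases hcase with hh | ⟨hum, hnp⟩
    · have h1 : l ∈ s.proposed m := hs.B l m hh
      have h2 : l' ∈ s.proposed m := hs.E m l' l h1 hl'm h
      exact hne (hs.D m l' l (hs.O m l' hml' h2) hh)
    · by_cases hl'p : l' ∈ s.proposed m
      · exact hum ⟨l', hs.O m l' hml' hl'p⟩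
      · have hfalse := find?_first (hU m) hnp hl'm h
        simp only [decide_eq_false_iff_not, not_not] at hfalse
        exact hl'p hfalse

theorem inv_step (hU : ∀ m, (mk.uPref m).Nodup) (hBr : ∀ l, Function.Injective (mk.bRank l))
    (hν : IsStable mk ν) (hs : DAInv mk ν s) : DAInv mk ν (step mk s) := by
  have holdsub : ∀ l m, m ∈ (step mk s).hold l →
      m ∈ s.hold l ∨ (¬ matched s m ∧ nextProposal mk s m = some l) := by
    intro l m hm
    rw [step_hold] at hm
    rcases Finset.mem_union.mp (Finset.filter_subset _ _ hm) with h | h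
    · exact Or.inl h
    · exact Or.inr (mem_proposalsTo.mp h)
  refine ⟨?_, ?_, ?_, ?_, ?_, ?_⟩
  · intro l
    rw [step_hold]
    exact topQ_card_le (hBr l) _
  · intro l m hm
    rcases holdsub l m hm with h | ⟨hum, hnp⟩
    · exact subset_step_proposed m (hs.B l m h)
    · rw [step_proposed, if_neg hum, hnp]
      exact Finset.mem_insert_self _ _
  · intro m l hl
    rcases step_proposed_cases hl with h | ⟨_, hnp⟩
    · exact hs.C m l h
    · exact List.mem_of_find?_eq_some hnp
  · intro m l l' h1 h2
    rcases holdsub l m h1 with h1' | ⟨hu1, hn1⟩ <;> rcases holdsub l' m h2 with h2' | ⟨hu2, hn2⟩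
    · exact hs.D m l l' h1' h2'
    · exact absurd ⟨l, h1'⟩ hu2
    · exact absurd ⟨l', h2'⟩ hu1
    · injection hn1.symm.trans hn2
  · intro m l₁ l₂ h2 h1m hlt
    rcases step_proposed_cases h2 with h2' | ⟨hum, hnp⟩
    · exact subset_step_proposed m (hs.E m l₁ l₂ h2' h1m hlt)
    · have hfalse := find?_first (hU m) hnp h1m hlt
      simp only [decide_eq_false_iff_not, not_not] at hfalse
      exact subset_step_proposed m hfalse
  · intro m l hmν hlp
    have hmB : m ∈ s.hold l ∪ proposalsTo mk s l := by
      rcases step_proposed_cases hlp with h | ⟨hum, hnp⟩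
      · exact Finset.mem_union_left _ (hs.O m l hmν h)
      · exact Finset.mem_union_right _ (mem_proposalsTo.mpr ⟨hum, hnp⟩)
    rw [step_hold]
    by_contra hnot
    set B := s.hold l ∪ proposalsTo mk s l with hBdef
    have hq : mk.quota l ≤ (B.filter (fun y => mk.bRank l y < mk.bRank l m)).card := by
      by_contra hq'
      push_neg at hq'
      exact hnot (mem_topQ.mpr ⟨hmB, hq'⟩)
    set T := B.filter (fun y => mk.bRank l y < mk.bRank l m) with hTdef
    have hνcard : (ν l).card ≤ mk.quota l := hν.1.1 l
    have hnsub : ¬ T ⊆ ν l := by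
      intro hsub
      have hT' : T ⊆ ν l \ {m} := by
        intro y hy
        rw [Finset.mem_sdiff, Finset.mem_singleton]
        refine ⟨hsub hy, ?_⟩
        rintro rfl
        exact absurd (Finset.mem_filter.mp hy).2 (lt_irrefl _)
      have h1 : (ν l \ {m}).card < (ν l).card := by
        have hsub1 : {m} ⊆ ν l := Finset.singleton_subset_iff.mpr hmν
        rw [Finset.card_sdiff_of_subset hsub1, Finset.card_singleton]
        have hpos : 0 < (ν l).card := Finset.card_pos.mpr ⟨m, hmν⟩
        omega
      exact absurd (le_trans hq (Finset.card_le_card hT'))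
        (not_le.mpr (lt_of_lt_of_le h1 hνcard))
    obtain ⟨y, hyT, hyν⟩ := Finset.not_subset.mp hnsub
    obtain ⟨hyB, hylt⟩ := Finset.mem_filter.mp hyT
    have hcase : y ∈ s.hold l ∨ (¬ matched s y ∧ nextProposal mk s y = some l) := by
      rcases Finset.mem_union.mp hyB with h | h
      · exact Or.inl h
      · exact Or.inr (mem_proposalsTo.mp h)
    have hlY : l ∈ mk.uPref y := by
      rcases hcase with h | ⟨_, hnp⟩
      · exact hs.C y l (hs.B l y h)
      · exact List.mem_of_find?_eq_some hnp
    refine absurd ?_ (hν.2.2 y l)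
    refine ⟨hlY, hyν, ?_, Or.inr ⟨m, hmν, hylt⟩⟩
    intro l' hyl'
    exact prefers_aux hU hν.2.1 hs hcase hyl' (fun h => hyν (h ▸ hyl'))

theorem inv_run (hU : ∀ m, (mk.uPref m).Nodup) (hBr : ∀ l, Function.Injective (mk.bRank l))
    (hν : IsStable mk ν) (n : ℕ) : DAInv mk ν (run mk n) := by
  induction n with
  | zero =>
    refine ⟨?_, ?_, ?_, ?_, ?_, ?_⟩ <;> simp [run]
  | succ n ih => exact inv_step hU hBr hν ih

theorem exists_done (mk : Market M L) :
    ∃ n, ∀ m, ¬ matched (run mk n) m → nextProposal mk (run mk n) m = none := by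
  by_contra hcon
  push_neg at hcon
  have key : ∀ n, n ≤ ∑ m : M, ((run mk n).proposed m).card := by
    intro n
    induction n with
    | zero => exact Nat.zero_le _
    | succ n ih =>
      obtain ⟨m0, hum, hnp⟩ := hcon n
      obtain ⟨l0, hl0⟩ := Option.ne_none_iff_exists'.mp hnp
      have hnew : l0 ∉ (run mk n).proposed m0 := by
        have := List.find?_some hl0
        simpa using this
      have hlt : ∑ m : M, ((run mk n).proposed m).card
          < ∑ m : M, ((run mk (n+1)).proposed m).card := by
        apply Finset.sum_lt_sum
        · intro i _
          exact Finset.card_le_card (subset_step_proposed i)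
        · refine ⟨m0, Finset.mem_univ _, ?_⟩
          have heq : (run mk (n+1)).proposed m0 = insert l0 ((run mk n).proposed m0) := by
            show (step mk (run mk n)).proposed m0 = _
            rw [step_proposed, if_neg hum, hl0]
          rw [heq, Finset.card_insert_of_notMem hnew]
          exact Nat.lt_succ_self _
      exact Nat.succ_le_of_lt (lt_of_le_of_lt ih hlt)
  have hbound : ∀ n, ∑ m : M, ((run mk n).proposed m).card ≤ Fintype.card M * Fintype.card L := by
    intro n
    calc ∑ m : M, ((run mk n).proposed m).card
        ≤ ∑ _m : M, Fintype.card L :=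
          Finset.sum_le_sum (fun i _ => (Finset.card_le_univ _).trans_eq (Finset.card_univ))
      _ = Fintype.card M * Fintype.card L := by
          rw [Finset.sum_const, smul_eq_mul, Finset.card_univ]
  have h1 := key (Fintype.card M * Fintype.card L + 1)
  have h2 := hbound (Fintype.card M * Fintype.card L + 1)
  omega

theorem key_lemma (hU : ∀ m, (mk.uPref m).Nodup) (hBr : ∀ l, Function.Injective (mk.bRank l))
    (hν : IsStable mk ν) {n : ℕ}
    (hdone : ∀ m, ¬ matched (run mk n) m → nextProposal mk (run mk n) m = none) :
    (∀ l, ((run mk n).hold l).card = (ν l).card) ∧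
      ∀ m : M, (∃ l, m ∈ ν l) ↔ matched (run mk n) m := by
  set f := run mk n with hf
  have hinv : DAInv mk ν f := inv_run hU hBr hν n
  have step1 : ∀ m, (∃ l, m ∈ ν l) → matched f m := by
    rintro m ⟨l, hml⟩
    by_contra hnm
    have hnone := hdone m hnm
    have hall := List.find?_eq_none.mp hnone l (hν.2.1 l m hml)
    simp only [decide_eq_true_eq, not_not] at hall
    exact hnm ⟨l, hinv.O m l hml hall⟩
  have step2 : ∀ l, (f.hold l).card ≤ (ν l).card := by
    intro l
    by_contra hlt
    push_neg at hlt
    have hns : ¬ f.hold l ⊆ ν l := fun hsub =>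
      absurd (Finset.card_le_card hsub) (not_le.mpr hlt)
    obtain ⟨m, hmh, hmν⟩ := Finset.not_subset.mp hns
    refine absurd ?_ (hν.2.2 m l)
    have hlm : l ∈ mk.uPref m := hinv.C m l (hinv.B l m hmh)
    refine ⟨hlm, hmν, ?_, Or.inl (lt_of_lt_of_le hlt (hinv.A l))⟩
    intro l' hml'
    exact prefers_aux hU hν.2.1 hinv (Or.inl hmh) hml' (fun h => hmν (h ▸ hml'))
  have hdisjν : ∀ x ∈ (Finset.univ : Finset L), ∀ y ∈ Finset.univ, x ≠ y →
      Disjoint (ν x) (ν y) := by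
    intro x _ y _ hxy
    rw [Finset.disjoint_left]
    intro m hmx hmy
    exact hxy (hν.1.2 m x y hmx hmy)
  have hdisjh : ∀ x ∈ (Finset.univ : Finset L), ∀ y ∈ Finset.univ, x ≠ y →
      Disjoint (f.hold x) (f.hold y) := by
    intro x _ y _ hxy
    rw [Finset.disjoint_left]
    intro m hmx hmy
    exact hxy (hinv.D m x y hmx hmy)
  have hcards : (Finset.univ.biUnion ν).card = ∑ l : L, (ν l).card := Finset.card_biUnion hdisjν
  have hcardh : (Finset.univ.biUnion f.hold).card = ∑ l : L, (f.hold l).card :=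
    Finset.card_biUnion hdisjh
  have hsub : Finset.univ.biUnion ν ⊆ Finset.univ.biUnion f.hold := by
    intro m hm
    rw [Finset.mem_biUnion] at hm ⊢
    obtain ⟨l, _, hml⟩ := hm
    obtain ⟨l', hml'⟩ := step1 m ⟨l, hml⟩
    exact ⟨l', Finset.mem_univ _, hml'⟩
  have hsum1 : ∑ l : L, (ν l).card ≤ ∑ l : L, (f.hold l).card := by
    rw [← hcards, ← hcardh]
    exact Finset.card_le_card hsub
  have hsum2 : ∑ l : L, (f.hold l).card ≤ ∑ l : L, (ν l).card :=
    Finset.sum_le_sum (fun l _ => step2 l)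
  have hsumeq : ∑ l : L, (f.hold l).card = ∑ l : L, (ν l).card := le_antisymm hsum2 hsum1
  have heach := (Finset.sum_eq_sum_iff_of_le (fun l (_ : l ∈ Finset.univ) => step2 l)).mp hsumeq
  refine ⟨fun l => heach l (Finset.mem_univ l), ?_⟩
  have hseteq : Finset.univ.biUnion ν = Finset.univ.biUnion f.hold :=
    Finset.eq_of_subset_of_card_le hsub (by rw [hcards, hcardh, hsumeq])
  intro m
  constructor
  · exact step1 m
  · rintro ⟨l, hml⟩
    have hmem : m ∈ Finset.univ.biUnion ν := by
      rw [hseteq]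
      exact Finset.mem_biUnion.mpr ⟨l, Finset.mem_univ _, hml⟩
    obtain ⟨l', _, h⟩ := Finset.mem_biUnion.mp hmem
    exact ⟨l', h⟩

end RHaux

/-- rural hospitals theorem: In a finite many-to-one matching
market with strict preferences, any two stable matchings fill the same number
of positions at each BS and match exactly the same set of users. -/
theorem rural_hospitals {M L : Type*} [Fintype M] [Fintype L] (mk : Market M L)
    (hU : ∀ m, (mk.uPref m).Nodup) (hB : ∀ l, Function.Injective (mk.bRank l))
    (μ μ' : L → Finset M)
    (hμ : Market.IsStable mk μ) (hμ' : Market.IsStable mk μ') :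
    (∀ l, (μ l).card = (μ' l).card) ∧
      ∀ m : M, (∃ l, m ∈ μ l) ↔ (∃ l, m ∈ μ' l) := by
  obtain ⟨n, hdone⟩ := exists_done mk
  obtain ⟨h1, h2⟩ := key_lemma hU hB hμ hdone
  obtain ⟨h1', h2'⟩ := key_lemma hU hB hμ' hdone
  exact ⟨fun l => (h1 l).symm.trans (h1' l), fun m => (h2 m).trans (h2' m).symm⟩
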